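/- For every integer m ≥ 1, the identity ∂_i^m(L_m) = (1 − b)^m·(m)_a!·x_j holds in T, where (t)_a = 1 + a + ⋯ + a^{t−1} and (m)_a! = ∏_{t=1}^m (t)_a. -/

import Mathlib

noncomputable section

/-- The `ℤⁿ`-degree of a word: the multidegree counting occurrences of each letter. -/
def degw {n : ℕ} (w : FreeMonoid (Fin n)) : Fin n → ℕ :=
  fun k => (FreeMonoid.toList w).count k

/-- The word `u` viewed as an element of the free algebra `T = F⟨x_1,…,x_n⟩`,
realized as the monoid algebra of the free monoid on `n` letters. -/
def wordOf (F : Type) [Field F] {n : ℕ} (u : FreeMonoid (Fin n)) :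
    MonoidAlgebra F (FreeMonoid (Fin n)) :=
  MonoidAlgebra.of F (FreeMonoid (Fin n)) u

/-- `x` is `ℤⁿ`-homogeneous of degree `d`: every word occurring in `x` has degree `d`. -/
def IsHomog (F : Type) [Field F] {n : ℕ}
    (x : MonoidAlgebra F (FreeMonoid (Fin n))) (d : Fin n → ℕ) : Prop :=
  ∀ w ∈ (x.coeff : FreeMonoid (Fin n) →₀ F).support, degw w = d

/-- decrement the `i`-th coordinate of a multidegree -/
def decrA {n : ℕ} (i : Fin n) (d : Fin n → ℕ) : Fin n → ℕ :=
  fun k => if k = i then d i - 1 else d k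

/-- the multidegree `t·e_i + e_j` -/
def dtA {n : ℕ} (i j : Fin n) (t : ℕ) : Fin n → ℕ :=
  fun k => if k = i then t else if k = j then 1 else 0

namespace S2

variable {F : Type} [Field F] {n : ℕ}

lemma wordOf_mul (u v : FreeMonoid (Fin n)) :
    wordOf F (u * v) = wordOf F u * wordOf F v :=
  map_mul (MonoidAlgebra.of F (FreeMonoid (Fin n))) u v

lemma wordOf_one : wordOf F (1 : FreeMonoid (Fin n)) = 1 :=
  map_one (MonoidAlgebra.of F (FreeMonoid (Fin n)))

lemma support_wordOf (w : FreeMonoid (Fin n)) :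
    (wordOf F w).coeff.support = {w} := by
  classical
  rw [wordOf, MonoidAlgebra.of_apply, MonoidAlgebra.coeff_single]
  exact Finsupp.support_single_ne_zero _ one_ne_zero

lemma degw_mul (u v : FreeMonoid (Fin n)) : degw (u * v) = degw u + degw v := by
  funext k
  simp [degw, FreeMonoid.toList_mul, List.count_append]

lemma degw_of (k : Fin n) : degw (FreeMonoid.of k) = fun l => if k = l then 1 else 0 := by
  funext l
  simp [degw, FreeMonoid.toList_of, List.count_singleton]

lemma homog_wordOf (w : FreeMonoid (Fin n)) : IsHomog F (wordOf F w) (degw w) := by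
  intro u hu
  rw [support_wordOf] at hu
  simp only [Finset.mem_singleton] at hu
  subst hu; rfl

lemma homog_zero (d : Fin n → ℕ) : IsHomog F (0 : MonoidAlgebra F (FreeMonoid (Fin n))) d := by
  intro w hw
  simp [Finsupp.support_zero] at hw

lemma homog_smul {x : MonoidAlgebra F (FreeMonoid (Fin n))} {d : Fin n → ℕ} (c : F)
    (hx : IsHomog F x d) : IsHomog F (c • x) d :=
  fun w hw => hx w (Finsupp.support_smul hw)

lemma homog_add {x y : MonoidAlgebra F (FreeMonoid (Fin n))} {d : Fin n → ℕ}
    (hx : IsHomog F x d) (hy : IsHomog F y d) : IsHomog F (x + y) d := by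
  classical
  intro w hw
  rcases Finset.mem_union.mp (Finsupp.support_add hw) with h | h
  · exact hx w h
  · exact hy w h

lemma homog_sub {x y : MonoidAlgebra F (FreeMonoid (Fin n))} {d : Fin n → ℕ}
    (hx : IsHomog F x d) (hy : IsHomog F y d) : IsHomog F (x - y) d := by
  classical
  intro w hw
  rcases Finset.mem_union.mp (Finsupp.support_sub hw) with h | h
  · exact hx w h
  · exact hy w h

lemma homog_mul {x y : MonoidAlgebra F (FreeMonoid (Fin n))} {d e : Fin n → ℕ}
    (hx : IsHomog F x d) (hy : IsHomog F y e) : IsHomog F (x * y) (d + e) := by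
  classical
  intro w hw
  obtain ⟨u, hu, v, hv, rfl⟩ := Finset.mem_mul.mp (MonoidAlgebra.support_coeff_mul_subset x y hw)
  rw [degw_mul, hx u hu, hy v hv]

lemma homog_sum {α : Type*} {s : Finset α} {f : α → MonoidAlgebra F (FreeMonoid (Fin n))}
    {d : Fin n → ℕ} (h : ∀ w ∈ s, IsHomog F (f w) d) :
    IsHomog F (∑ w ∈ s, f w) d := by
  classical
  induction s using Finset.induction_on with
  | empty => simpa using homog_zero d
  | insert _ _ hx ih =>
    rw [Finset.sum_insert hx]
    exact homog_add (h _ (Finset.mem_insert_self _ _))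
      (ih fun w hw => h w (Finset.mem_insert_of_mem hw))

lemma eq_sum_words (x : MonoidAlgebra F (FreeMonoid (Fin n))) :
    x = ∑ w ∈ x.coeff.support,
        x.coeff w • wordOf F w := by
  classical
  conv_lhs => rw [← MonoidAlgebra.sum_coeff_single x]
  rw [Finsupp.sum]
  refine Finset.sum_congr rfl fun w _ => ?_
  rw [wordOf, MonoidAlgebra.of_apply]
  rw [MonoidAlgebra.smul_single, smul_eq_mul, mul_one]

end S2

open S2

/-- `∂_i^m(L_m) = (1 − b)^m (m)_a! x_j` for `m ≥ 1`, where
`a = q_{ii}⁻¹`, `b = q_{ij}⁻¹`, `(t)_a = 1 + a + ⋯ + a^{t−1}`, `(m)_a! = ∏_{t=1}^m (t)_a`,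
`L_0 = x_j` and `L_m = x_i L_{m−1} − L_{m−1} x_i`. -/
theorem stmt_2 (F : Type) [Field F] [CharZero F] (n : ℕ) (hn : 2 ≤ n)
    (q : Fin n → Fin n → F) (hq : ∀ k l, q k l ≠ 0)
    (D : Fin n → Module.End F (MonoidAlgebra F (FreeMonoid (Fin n))))
    (hD1 : ∀ i, D i 1 = 0)
    (hDx : ∀ i k : Fin n, D i (wordOf F (FreeMonoid.of k)) = if i = k then 1 else 0)
    (hDmul : ∀ (i : Fin n) (u v : MonoidAlgebra F (FreeMonoid (Fin n))) (d : Fin n → ℕ),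
      IsHomog F u d →
      D i (u * v) = D i u * v + (∏ k : Fin n, (q i k)⁻¹ ^ d k) • (u * D i v))
    (i j : Fin n) (hij : i ≠ j)
    (L : ℕ → MonoidAlgebra F (FreeMonoid (Fin n)))
    (hL0 : L 0 = wordOf F (FreeMonoid.of j))
    (hLs : ∀ m : ℕ, L (m + 1) =
      wordOf F (FreeMonoid.of i) * L m - L m * wordOf F (FreeMonoid.of i))
    (m : ℕ) (hm : 1 ≤ m) :
    (D i ^ m) (L m) =
      ((1 - (q i j)⁻¹) ^ m *
          ∏ t ∈ Finset.range m, ∑ l ∈ Finset.range (t + 1), (q i i)⁻¹ ^ l) •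
        wordOf F (FreeMonoid.of j) := by
  classical
  set a : F := (q i i)⁻¹ with ha
  set b : F := (q i j)⁻¹ with hb
  -- product of q-powers over a single-letter degree
  have prodk : ∀ k : Fin n, (∏ l : Fin n, (q i l)⁻¹ ^ (degw (FreeMonoid.of k) l)) = (q i k)⁻¹ := by
    intro k
    rw [degw_of]
    rw [show (∏ l : Fin n, (q i l)⁻¹ ^ (if k = l then 1 else 0))
        = ∏ l : Fin n, (if k = l then (q i l)⁻¹ else 1) from
      Finset.prod_congr rfl (fun l _ => by split <;> simp)]
    rw [Finset.prod_ite_eq, if_pos (Finset.mem_univ k)]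
  -- product of q-powers over the degree dtA i j t
  have proddt : ∀ t : ℕ, (∏ l : Fin n, (q i l)⁻¹ ^ (dtA i j t l)) = a ^ t * b := by
    intro t
    have step : ∀ l : Fin n, (q i l)⁻¹ ^ (dtA i j t l)
        = (if l = i then a ^ t else 1) * (if l = j then b else 1) := by
      intro l
      rcases eq_or_ne l i with rfl | hli
      · simp [dtA, hij, ha]
      · rcases eq_or_ne l j with rfl | hlj
        · simp [dtA, hli, hb]
        · simp [dtA, hli, hlj]
    rw [Finset.prod_congr rfl (fun l _ => step l), Finset.prod_mul_distrib,
      Finset.prod_ite_eq', Finset.prod_ite_eq', if_pos (Finset.mem_univ i),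
      if_pos (Finset.mem_univ j)]
  -- derivative of a letter times something
  have Dletmul : ∀ (k : Fin n) (v : MonoidAlgebra F (FreeMonoid (Fin n))),
      D i (wordOf F (FreeMonoid.of k) * v)
        = (if i = k then v else 0) + (q i k)⁻¹ • (wordOf F (FreeMonoid.of k) * D i v) := by
    intro k v
    rw [hDmul i (wordOf F (FreeMonoid.of k)) v (degw (FreeMonoid.of k)) (homog_wordOf _),
      hDx, prodk]
    congr 1
    split <;> simp
  -- derivative of v * x_i for v homogeneous of degree dtA i j t
  have Dright : ∀ (t : ℕ) (v : MonoidAlgebra F (FreeMonoid (Fin n))),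
      IsHomog F v (dtA i j t) →
      D i (v * wordOf F (FreeMonoid.of i)) = (D i v) * wordOf F (FreeMonoid.of i)
        + (a ^ t * b) • v := by
    intro t v hv
    rw [hDmul i v (wordOf F (FreeMonoid.of i)) (dtA i j t) hv, hDx, if_pos rfl, proddt,
      mul_one]
  -- the key single-step commutation lemma
  have KL : ∀ (s t : ℕ) (v : MonoidAlgebra F (FreeMonoid (Fin n))),
      IsHomog F v (dtA i j t) →
      D i (a ^ s • (wordOf F (FreeMonoid.of i) * v) - v * wordOf F (FreeMonoid.of i))
        = (a ^ s - a ^ t * b) • v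
          + (a ^ (s+1) • (wordOf F (FreeMonoid.of i) * D i v)
              - (D i v) * wordOf F (FreeMonoid.of i)) := by
    intro s t v hv
    rw [map_sub, map_smul, Dletmul i v, if_pos rfl, Dright t v hv, ← ha]
    rw [smul_add, smul_smul, ← pow_succ, sub_smul]
    abel
  -- behaviour of D on words: homogeneity, and vanishing when no x_i occurs
  have DW : ∀ w : FreeMonoid (Fin n),
      IsHomog F (D i (wordOf F w)) (decrA i (degw w))
      ∧ (degw w i = 0 → D i (wordOf F w) = 0) := by
    intro w
    refine FreeMonoid.recOn w ?_ ?_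
    · constructor
      · rw [wordOf_one, hD1 i]
        exact homog_zero _
      · intro _
        rw [wordOf_one, hD1 i]
    · intro k w' ih
      rw [wordOf_mul, Dletmul k, degw_mul]
      by_cases hik : i = k
      · subst hik
        constructor
        · rw [if_pos rfl]
          have key0 : decrA i (degw (FreeMonoid.of i) + degw w') = degw w' := by
            funext l
            by_cases hl : l = i
            · subst hl; simp [decrA, degw_of]
            · have hil : ¬ i = l := fun h => hl h.symm
              simp [decrA, degw_of, hl, hil]
          rw [key0]
          by_cases h0 : degw w' i = 0
          · rw [ih.2 h0, mul_zero, smul_zero, add_zero]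
            exact homog_wordOf w'
          · refine homog_add (homog_wordOf w') (homog_smul _ ?_)
            have key : degw (FreeMonoid.of i) + decrA i (degw w') = degw w' := by
              funext l
              by_cases hl : l = i
              · subst hl
                simp [decrA, degw_of]
                omega
              · have hil : ¬ i = l := fun h => hl h.symm
                simp [decrA, degw_of, hl, hil]
            rw [← key]
            exact homog_mul (homog_wordOf _) ih.1
        · intro habs
          exfalso
          have : (degw (FreeMonoid.of i) + degw w') i = 1 + degw w' i := by
            simp [degw_of]
          omega
      · rw [if_neg hik, zero_add]
        have hki : k ≠ i := fun h => hik h.symm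
        constructor
        · have key : decrA i (degw (FreeMonoid.of k) + degw w')
              = degw (FreeMonoid.of k) + decrA i (degw w') := by
            funext l
            by_cases hl : l = i
            · subst hl; simp [decrA, degw_of, hki]
            · simp [decrA, degw_of, hl]
          rw [key]
          exact homog_smul _ (homog_mul (homog_wordOf _) ih.1)
        · intro h0
          have h0' : degw w' i = 0 := by
            have : (degw (FreeMonoid.of k) + degw w') i = degw w' i := by
              simp [degw_of, hki]
            omega
          rw [ih.2 h0', mul_zero, smul_zero]
  -- D of a general element as a sum over its words
  have Dsum : ∀ x : MonoidAlgebra F (FreeMonoid (Fin n)),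
      D i x = ∑ w ∈ x.coeff.support,
        x.coeff w • D i (wordOf F w) := by
    intro x
    conv_lhs => rw [eq_sum_words x]
    rw [map_sum]
    exact Finset.sum_congr rfl fun w _ => map_smul (D i) _ _
  have Dhomog : ∀ (x : MonoidAlgebra F (FreeMonoid (Fin n))) (d : Fin n → ℕ),
      IsHomog F x d → IsHomog F (D i x) (decrA i d) := by
    intro x d hx
    rw [Dsum x]
    refine homog_sum fun w hw => homog_smul _ ?_
    have h1 := (DW w).1
    rw [hx w hw] at h1
    exact h1
  have Dzero : ∀ (x : MonoidAlgebra F (FreeMonoid (Fin n))) (d : Fin n → ℕ),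
      IsHomog F x d → d i = 0 → D i x = 0 := by
    intro x d hx h0
    rw [Dsum x]
    refine Finset.sum_eq_zero fun w hw => ?_
    rw [(DW w).2 (by rw [hx w hw]; exact h0), smul_zero]
  -- homogeneity of the L's
  have dt0 : dtA i j 0 = degw (FreeMonoid.of j) := by
    funext l
    by_cases hl : l = i
    · subst hl; simp [dtA, degw_of, Ne.symm hij]
    · by_cases hlj : l = j
      · subst hlj; simp [dtA, hl, degw_of]
      · have hjl : ¬ j = l := fun h => hlj h.symm
        simp [dtA, hl, hlj, degw_of, hjl]
  have dtsL : ∀ t : ℕ, degw (FreeMonoid.of i) + dtA i j t = dtA i j (t+1) := by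
    intro t
    funext l
    by_cases hl : l = i
    · subst hl; simp [dtA, degw_of]; omega
    · have hil : ¬ i = l := fun h => hl h.symm
      simp [dtA, degw_of, hl, hil]
  have dtsR : ∀ t : ℕ, dtA i j t + degw (FreeMonoid.of i) = dtA i j (t+1) := by
    intro t
    rw [← dtsL t]
    funext l
    simp [add_comm]
  have homogL : ∀ t : ℕ, IsHomog F (L t) (dtA i j t) := by
    intro t
    induction t with
    | zero => rw [hL0, dt0]; exact homog_wordOf _
    | succ t iht =>
      rw [hLs t]
      refine homog_sub ?_ ?_
      · rw [← dtsL t]; exact homog_mul (homog_wordOf _) iht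
      · rw [← dtsR t]; exact homog_mul iht (homog_wordOf _)
  have decr_dt : ∀ t : ℕ, decrA i (dtA i j t) = dtA i j (t - 1) := by
    intro t
    funext l
    by_cases hl : l = i
    · subst hl; simp [decrA, dtA]
    · simp [decrA, dtA, hl]
  have homogDpow : ∀ (r t : ℕ) (v : MonoidAlgebra F (FreeMonoid (Fin n))),
      IsHomog F v (dtA i j t) → r ≤ t → IsHomog F ((D i ^ r) v) (dtA i j (t - r)) := by
    intro r
    induction r with
    | zero => intro t v hv _; simpa using hv
    | succ r ihr =>
      intro t v hv h
      rw [pow_succ', Module.End.mul_apply]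
      have h2 := Dhomog _ _ (ihr t v hv (Nat.le_of_succ_le h))
      rw [decr_dt] at h2
      have e : t - r - 1 = t - (r + 1) := by omega
      rw [e] at h2
      exact h2
  have DLzero : ∀ t : ℕ, (D i ^ (t+1)) (L t) = 0 := by
    intro t
    rw [pow_succ', Module.End.mul_apply]
    refine Dzero _ (dtA i j (t - t)) (homogDpow t t (L t) (homogL t) le_rfl) ?_
    simp [dtA]
  -- the iterated commutation lemma
  have LA : ∀ (t : ℕ) (v : MonoidAlgebra F (FreeMonoid (Fin n))),
      IsHomog F v (dtA i j t) → ∀ r : ℕ, r ≤ t →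
      (D i ^ (r+1)) ((1:F) • (wordOf F (FreeMonoid.of i) * v) - v * wordOf F (FreeMonoid.of i))
        = (∑ s ∈ Finset.range (r+1), (a ^ s - a ^ (t-s) * b)) • (D i ^ r) v
          + (a ^ (r+1) • (wordOf F (FreeMonoid.of i) * (D i ^ (r+1)) v)
              - ((D i ^ (r+1)) v) * wordOf F (FreeMonoid.of i)) := by
    intro t v hv r
    induction r with
    | zero =>
      intro _
      have hk := KL 0 t v hv
      rw [pow_zero] at hk
      rw [pow_one, hk]
      simp [Finset.sum_range_one]
    | succ r ihr =>
      intro h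
      have h' : r ≤ t := Nat.le_of_succ_le h
      have e1 : (D i ^ (r+1+1)) ((1:F) • (wordOf F (FreeMonoid.of i) * v)
            - v * wordOf F (FreeMonoid.of i))
          = D i ((D i ^ (r+1)) ((1:F) • (wordOf F (FreeMonoid.of i) * v)
            - v * wordOf F (FreeMonoid.of i))) := by
        rw [pow_succ' (D i) (r+1), Module.End.mul_apply]
      rw [e1, ihr h', map_add, map_smul]
      have hv' : IsHomog F ((D i ^ (r+1)) v) (dtA i j (t - (r+1))) :=
        homogDpow (r+1) t v hv h
      rw [KL (r+1) (t - (r+1)) ((D i ^ (r+1)) v) hv']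
      have hDr : D i ((D i ^ r) v) = (D i ^ (r+1)) v := by
        rw [pow_succ', Module.End.mul_apply]
      have hDr2 : D i ((D i ^ (r+1)) v) = (D i ^ (r+1+1)) v := by
        rw [pow_succ' (D i) (r+1), Module.End.mul_apply]
      rw [hDr, hDr2]
      conv_rhs => rw [Finset.sum_range_succ, add_smul]
      abel
  -- the main induction
  have main : ∀ m : ℕ, (D i ^ m) (L m)
      = ((1 - b) ^ m * ∏ t ∈ Finset.range m, ∑ l ∈ Finset.range (t + 1), a ^ l) •
          wordOf F (FreeMonoid.of j) := by
    intro m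
    induction m with
    | zero => simp [hL0]
    | succ m ihm =>
      have hL : L (m+1) = (1:F) • (wordOf F (FreeMonoid.of i) * L m)
          - L m * wordOf F (FreeMonoid.of i) := by
        rw [hLs m, one_smul]
      rw [hL, LA m (L m) (homogL m) m le_rfl, DLzero m, ihm]
      simp only [mul_zero, smul_zero, zero_mul, sub_zero, add_zero]
      rw [smul_smul]
      congr 1
      have hsum : (∑ s ∈ Finset.range (m+1), (a ^ s - a ^ (m-s) * b))
          = (1 - b) * ∑ s ∈ Finset.range (m+1), a ^ s := by
        rw [Finset.sum_sub_distrib]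
        have hrefl : (∑ s ∈ Finset.range (m+1), a ^ (m-s) * b)
            = (∑ s ∈ Finset.range (m+1), a ^ s) * b := by
          rw [← Finset.sum_mul]
          congr 1
          have := Finset.sum_range_reflect (fun s => a ^ s) (m+1)
          simpa using this
        rw [hrefl]
        ring
      rw [hsum, Finset.prod_range_succ]
      ring
  exact main m

end
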